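/- Let A be a symmetric n×n real matrix (indexed 1..n), and extend a_{kl} = 0 whenever k or l is outside {1,...,n}. Define g_{kl} = -(1/2)(a_{kl} + a_{k+1,l+1} - a_{k,l+1} - a_{k+1,l}) for k,l in {0,...,n}. Then for all x_0,...,x_n ∈ ℝ, with y_k = x_k - x_{k-1} for k = 1,...,n, we have ∑_{k,l=1}^n a_{kl} y_k y_l = ∑_{k,l=0}^n g_{kl} (x_k - x_l)^2. -/

import Mathlib

private lemma icc_insert (a b : ℤ) (h : a ≤ b + 1) :
    Finset.Icc a (b+1) = insert (b+1) (Finset.Icc a b) := by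
  ext t; simp only [Finset.mem_Icc, Finset.mem_insert]; omega

private lemma abel_sum (b z : ℤ → ℝ) (n : ℕ) :
    ∑ l ∈ Finset.Icc (1:ℤ) n, b l * (z l - z (l-1))
      = ∑ l ∈ Finset.Icc (0:ℤ) n, (b l - b (l+1)) * z l
        + b ((n:ℤ)+1) * z n - b 0 * z 0 := by
  induction n with
  | zero => simp; ring
  | succ m ih =>
    have hc : ((m+1 : ℕ) : ℤ) = (m:ℤ)+1 := by push_cast; ring
    rw [hc, icc_insert 1 m (by omega), icc_insert 0 m (by omega),
      Finset.sum_insert (by simp), Finset.sum_insert (by simp), ih]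
    have h1 : (m:ℤ)+1-1 = m := by ring
    rw [h1]
    ring

private lemma telescope_sum (b : ℤ → ℝ) (n : ℕ) :
    ∑ l ∈ Finset.Icc (0:ℤ) n, (b l - b (l+1)) = b 0 - b ((n:ℤ)+1) := by
  have h := abel_sum b (fun _ => 1) n
  simp only [sub_self, mul_zero, Finset.sum_const_zero, mul_one] at h
  have : ∑ l ∈ Finset.Icc (0:ℤ) n, (b l - b (l+1))
      = ∑ l ∈ Finset.Icc (0:ℤ) n, (b l - b (l+1)) * 1 := by
    apply Finset.sum_congr rfl; intros; ring
  rw [this]; linarith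

/-- Energy form in increments equals sum of harmonic couplings in positions. -/
theorem energy_increment_to_position (n : ℕ) (a : ℤ → ℤ → ℝ)
    (hsym : ∀ k l, a k l = a l k)
    (hzero : ∀ k l : ℤ, (k < 1 ∨ (n : ℤ) < k ∨ l < 1 ∨ (n : ℤ) < l) → a k l = 0)
    (g : ℤ → ℤ → ℝ)
    (hg : ∀ k l : ℤ, g k l = -(1/2) * (a k l + a (k+1) (l+1) - a k (l+1) - a (k+1) l))
    (x : ℤ → ℝ) (y : ℤ → ℝ) (hy : ∀ k : ℤ, y k = x k - x (k-1)) :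
    ∑ k ∈ Finset.Icc (1:ℤ) n, ∑ l ∈ Finset.Icc (1:ℤ) n, a k l * y k * y l
      = ∑ k ∈ Finset.Icc (0:ℤ) n, ∑ l ∈ Finset.Icc (0:ℤ) n, g k l * (x k - x l)^2 := by
  -- Step 1: inner Abel summation in l
  have key1 : ∀ k : ℤ, ∑ l ∈ Finset.Icc (1:ℤ) n, a k l * y k * y l
      = ∑ l ∈ Finset.Icc (0:ℤ) n, (a k l - a k (l+1)) * x l * y k := by
    intro k
    have hab := abel_sum (a k) x n
    have h0 : a k 0 = 0 := hzero k 0 (by omega)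
    have h1 : a k ((n:ℤ)+1) = 0 := hzero k _ (by omega)
    calc ∑ l ∈ Finset.Icc (1:ℤ) n, a k l * y k * y l
        = (∑ l ∈ Finset.Icc (1:ℤ) n, a k l * (x l - x (l-1))) * y k := by
          rw [Finset.sum_mul]; apply Finset.sum_congr rfl; intro l _; rw [hy l]; ring
      _ = (∑ l ∈ Finset.Icc (0:ℤ) n, (a k l - a k (l+1)) * x l) * y k := by
          rw [hab, h0, h1]; ring
      _ = ∑ l ∈ Finset.Icc (0:ℤ) n, (a k l - a k (l+1)) * x l * y k := by
          rw [Finset.sum_mul]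
  -- Step 2: outer Abel summation in k
  have key2 : ∀ l : ℤ, ∑ k ∈ Finset.Icc (1:ℤ) n, (a k l - a k (l+1)) * x l * y k
      = ∑ k ∈ Finset.Icc (0:ℤ) n,
          ((a k l - a k (l+1)) - (a (k+1) l - a (k+1) (l+1))) * (x l * x k) := by
    intro l
    have hab := abel_sum (fun k => (a k l - a k (l+1)) * x l) x n
    have h0 : a 0 l = 0 := hzero 0 l (by omega)
    have h0' : a 0 (l+1) = 0 := hzero 0 _ (by omega)
    have h1 : a ((n:ℤ)+1) l = 0 := hzero _ l (by omega)
    have h1' : a ((n:ℤ)+1) (l+1) = 0 := hzero _ _ (by omega)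
    calc ∑ k ∈ Finset.Icc (1:ℤ) n, (a k l - a k (l+1)) * x l * y k
        = ∑ k ∈ Finset.Icc (1:ℤ) n, ((a k l - a k (l+1)) * x l) * (x k - x (k-1)) := by
          apply Finset.sum_congr rfl; intro k _; rw [hy k]
      _ = ∑ k ∈ Finset.Icc (0:ℤ) n,
            ((a k l - a k (l+1)) * x l - (a (k+1) l - a (k+1) (l+1)) * x l) * x k := by
          rw [hab, h0, h0', h1, h1']; ring
      _ = ∑ k ∈ Finset.Icc (0:ℤ) n,
            ((a k l - a k (l+1)) - (a (k+1) l - a (k+1) (l+1))) * (x l * x k) := by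
          apply Finset.sum_congr rfl; intro k _; ring
  -- Row sums of g vanish
  have grow : ∀ k : ℤ, ∑ l ∈ Finset.Icc (0:ℤ) n, g k l = 0 := by
    intro k
    have ht := telescope_sum (fun l => a k l - a (k+1) l) n
    have h0 : a k 0 = 0 := hzero k 0 (by omega)
    have h0' : a (k+1) 0 = 0 := hzero _ 0 (by omega)
    have h1 : a k ((n:ℤ)+1) = 0 := hzero k _ (by omega)
    have h1' : a (k+1) ((n:ℤ)+1) = 0 := hzero _ _ (by omega)
    calc ∑ l ∈ Finset.Icc (0:ℤ) n, g k l
        = ∑ l ∈ Finset.Icc (0:ℤ) n,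
            (-(1/2)) * ((a k l - a (k+1) l) - (a k (l+1) - a (k+1) (l+1))) := by
          apply Finset.sum_congr rfl; intro l _; rw [hg k l]; ring
      _ = (-(1/2)) * ∑ l ∈ Finset.Icc (0:ℤ) n,
            ((a k l - a (k+1) l) - (a k (l+1) - a (k+1) (l+1))) := by
          rw [Finset.mul_sum]
      _ = 0 := by rw [ht, h0, h0', h1, h1']; ring
  have gsymm : ∀ k l : ℤ, g k l = g l k := by
    intro k l
    rw [hg k l, hg l k, hsym k l, hsym (k+1) (l+1), hsym k (l+1), hsym (k+1) l]
    ring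
  have gcol : ∀ l : ℤ, ∑ k ∈ Finset.Icc (0:ℤ) n, g k l = 0 := by
    intro l
    rw [show (∑ k ∈ Finset.Icc (0:ℤ) n, g k l) = ∑ k ∈ Finset.Icc (0:ℤ) n, g l k from
      Finset.sum_congr rfl (fun k _ => gsymm k l), grow l]
  -- Rewrite RHS
  have hR : ∑ k ∈ Finset.Icc (0:ℤ) n, ∑ l ∈ Finset.Icc (0:ℤ) n, g k l * (x k - x l)^2
      = ∑ k ∈ Finset.Icc (0:ℤ) n, ∑ l ∈ Finset.Icc (0:ℤ) n, (-2) * g k l * (x k * x l) := by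
    have expand : ∀ k : ℤ, ∑ l ∈ Finset.Icc (0:ℤ) n, g k l * (x k - x l)^2
        = (x k)^2 * (∑ l ∈ Finset.Icc (0:ℤ) n, g k l)
          + (∑ l ∈ Finset.Icc (0:ℤ) n, g k l * (x l)^2)
          + (∑ l ∈ Finset.Icc (0:ℤ) n, (-2) * g k l * (x k * x l)) := by
      intro k
      rw [Finset.mul_sum, ← Finset.sum_add_distrib, ← Finset.sum_add_distrib]
      apply Finset.sum_congr rfl; intro l _; ring
    calc ∑ k ∈ Finset.Icc (0:ℤ) n, ∑ l ∈ Finset.Icc (0:ℤ) n, g k l * (x k - x l)^2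
        = ∑ k ∈ Finset.Icc (0:ℤ) n,
            ((∑ l ∈ Finset.Icc (0:ℤ) n, g k l * (x l)^2)
              + (∑ l ∈ Finset.Icc (0:ℤ) n, (-2) * g k l * (x k * x l))) := by
          apply Finset.sum_congr rfl; intro k _; rw [expand k, grow k]; ring
      _ = (∑ k ∈ Finset.Icc (0:ℤ) n, ∑ l ∈ Finset.Icc (0:ℤ) n, g k l * (x l)^2)
            + ∑ k ∈ Finset.Icc (0:ℤ) n, ∑ l ∈ Finset.Icc (0:ℤ) n, (-2) * g k l * (x k * x l) := by
          rw [Finset.sum_add_distrib]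
      _ = ∑ k ∈ Finset.Icc (0:ℤ) n, ∑ l ∈ Finset.Icc (0:ℤ) n, (-2) * g k l * (x k * x l) := by
          rw [Finset.sum_comm]
          have : ∑ l ∈ Finset.Icc (0:ℤ) n, ∑ k ∈ Finset.Icc (0:ℤ) n, g k l * (x l)^2 = 0 := by
            apply Finset.sum_eq_zero; intro l _
            rw [← Finset.sum_mul, gcol l]; ring
          rw [this]; ring
  rw [hR]
  -- Put LHS in double-difference form
  calc ∑ k ∈ Finset.Icc (1:ℤ) n, ∑ l ∈ Finset.Icc (1:ℤ) n, a k l * y k * y l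
      = ∑ k ∈ Finset.Icc (1:ℤ) n, ∑ l ∈ Finset.Icc (0:ℤ) n, (a k l - a k (l+1)) * x l * y k := by
        apply Finset.sum_congr rfl; intro k _; exact key1 k
    _ = ∑ l ∈ Finset.Icc (0:ℤ) n, ∑ k ∈ Finset.Icc (1:ℤ) n, (a k l - a k (l+1)) * x l * y k := by
        rw [Finset.sum_comm]
    _ = ∑ l ∈ Finset.Icc (0:ℤ) n, ∑ k ∈ Finset.Icc (0:ℤ) n,
          ((a k l - a k (l+1)) - (a (k+1) l - a (k+1) (l+1))) * (x l * x k) := by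
        apply Finset.sum_congr rfl; intro l _; exact key2 l
    _ = ∑ k ∈ Finset.Icc (0:ℤ) n, ∑ l ∈ Finset.Icc (0:ℤ) n, (-2) * g k l * (x k * x l) := by
        rw [Finset.sum_comm]
        apply Finset.sum_congr rfl; intro k _
        apply Finset.sum_congr rfl; intro l _
        rw [hg k l]; ring
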